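/- arXiv:1506.04624 — 3 statements merged into one kernel-verified Lean document; each statement's English description precedes it below -/
import Mathlib

section
/- The complex vector space ℂ^16 with its standard Hermitian inner product g does not admit ten complex-linear endomorphisms I₀,…,I₉ satisfying Iₐ² = Id, g(Iₐ x, y) = g(x, Iₐ y) for all a, and Iₐ∘I_b = -I_b∘Iₐ for all a ≠ b. -/
section Aux

variable {A : Type*} [Ring A] [Algebra ℂ A] (I : Fin 10 → A)
  (hsq : ∀ a, I a * I a = 1)
  (hanti : ∀ a b, a ≠ b → I a * I b = -(I b * I a))

/-- Product of generators along a list. -/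
noncomputable def prodI (l : List (Fin 10)) : A := (l.map I).prod

lemma prodI_nil : prodI I ([] : List (Fin 10)) = 1 := rfl

lemma prodI_cons (a : Fin 10) (l : List (Fin 10)) :
    prodI I (a :: l) = I a * prodI I l := by
  simp [prodI]

lemma prodI_append (l l' : List (Fin 10)) :
    prodI I (l ++ l') = prodI I l * prodI I l' := by
  simp [prodI]

include hsq hanti in
lemma conj_prodI (b : Fin 10) (l : List (Fin 10)) :
    I b * prodI I l * I b = ((-1 : ℂ) ^ (l.length + l.count b)) • prodI I l := by
  induction l with
  | nil => simp [prodI_nil, hsq b]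
  | cons c t ih =>
    have key : I b * prodI I (c :: t) * I b
        = (I b * I c * I b) * (I b * prodI I t * I b) := by
      rw [prodI_cons]
      have h1 : I b * I b = 1 := hsq b
      rw [show (I b * I c * I b) * (I b * prodI I t * I b)
          = I b * I c * (I b * I b) * prodI I t * I b by noncomm_ring, h1]
      noncomm_ring
    rw [key, ih]
    by_cases hcb : c = b
    · subst hcb
      have h1 : I c * I c * I c = I c := by rw [hsq c]; simp
      rw [h1, prodI_cons]
      rw [mul_smul_comm]
      congr 1
      have : (c :: t).length + (c :: t).count c = (t.length + t.count c) + 2 := by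
        simp [List.count_cons]; ring
      rw [this, pow_add, pow_add]
      ring
    · have h1 : I b * I c * I b = -(I c) := by
        rw [hanti b c (Ne.symm hcb)]
        have : -(I c * I b) * I b = -(I c * (I b * I b)) := by noncomm_ring
        rw [this, hsq b]; simp
      rw [h1, prodI_cons]
      have hcount : (c :: t).count b = t.count b := by
        simp [List.count_cons, hcb]
      rw [hcount]
      have hlen : (c :: t).length = t.length + 1 := rfl
      rw [hlen]
      have : ((-1 : ℂ) ^ (t.length + 1 + t.count b))
          = -((-1 : ℂ) ^ (t.length + t.count b)) := by
        rw [show t.length + 1 + t.count b = (t.length + t.count b) + 1 by ring, pow_succ]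
        ring
      rw [this]
      rw [neg_mul, mul_smul_comm, neg_smul]

include hsq hanti in
lemma sq_prodI (l : List (Fin 10)) (hl : l.Nodup) :
    ∃ ε : ℂ, (ε = 1 ∨ ε = -1) ∧ prodI I l * prodI I l = ε • 1 := by
  induction l with
  | nil => exact ⟨1, Or.inl rfl, by simp [prodI_nil]⟩
  | cons a t ih =>
    obtain ⟨hat, htd⟩ := List.nodup_cons.mp hl
    obtain ⟨ε, hε, hQ⟩ := ih htd
    have hcount : t.count a = 0 := List.count_eq_zero_of_not_mem hat
    have hconj := conj_prodI I hsq hanti a t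
    rw [hcount, Nat.add_zero] at hconj
    -- Q * I a = s • (I a * Q)
    have hswap : prodI I t * I a = ((-1 : ℂ) ^ t.length) • (I a * prodI I t) := by
      have := congrArg (fun x => I a * x) hconj
      calc prodI I t * I a = (I a * I a) * (prodI I t * I a) := by rw [hsq a]; simp
        _ = I a * (I a * prodI I t * I a) := by noncomm_ring
        _ = I a * (((-1 : ℂ) ^ t.length) • prodI I t) := by rw [hconj]
        _ = ((-1 : ℂ) ^ t.length) • (I a * prodI I t) := by rw [mul_smul_comm]
    refine ⟨((-1 : ℂ) ^ t.length) * ε, ?_, ?_⟩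
    · rcases Nat.even_or_odd t.length with he | ho
      · rw [he.neg_one_pow, one_mul]; exact hε
      · rw [ho.neg_one_pow]; rcases hε with h | h <;> simp [h]
    · calc prodI I (a :: t) * prodI I (a :: t)
          = I a * (prodI I t * I a) * prodI I t := by rw [prodI_cons]; noncomm_ring
        _ = I a * (((-1 : ℂ) ^ t.length) • (I a * prodI I t)) * prodI I t := by rw [hswap]
        _ = ((-1 : ℂ) ^ t.length) • ((I a * I a) * (prodI I t * prodI I t)) := by
            rw [mul_smul_comm, smul_mul_assoc]; congr 1; noncomm_ring
        _ = ((-1 : ℂ) ^ t.length) • (prodI I t * prodI I t) := by rw [hsq a]; simp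
        _ = (((-1 : ℂ) ^ t.length) * ε) • 1 := by rw [hQ, smul_smul]

end Aux

section TraceAux

variable (I : Fin 10 → Module.End ℂ (EuclideanSpace ℂ (Fin 16)))
  (hsq : ∀ a, I a * I a = 1)
  (hanti : ∀ a b, a ≠ b → I a * I b = -(I b * I a))

local notation "V" => EuclideanSpace ℂ (Fin 16)
local notation "tr" => LinearMap.trace ℂ (EuclideanSpace ℂ (Fin 16))

include hsq hanti in
lemma trace_prodI_eq_zero (l : List (Fin 10)) (b : Fin 10)
    (hodd : Odd (l.length + l.count b)) :
    tr (prodI I l) = 0 := by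
  have hconj := conj_prodI I hsq hanti b l
  have hsign : ((-1 : ℂ) ^ (l.length + l.count b)) = -1 := hodd.neg_one_pow
  rw [hsign] at hconj
  have h1 : tr (I b * prodI I l * I b) = tr (prodI I l) := by
    rw [LinearMap.trace_mul_comm, ← mul_assoc, hsq b, one_mul]
  rw [hconj] at h1
  rw [neg_smul, one_smul, map_neg] at h1
  have h2 : (2 : ℂ) * tr (prodI I l) = 0 := by linear_combination -h1
  have := mul_eq_zero.mp h2
  simpa using this

/-- `ℂ¹⁶` with its standard Hermitian inner product admits no family of ten
ℂ-linear, self-adjoint, pairwise anticommuting involutions. -/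
theorem no_ten_anticommuting_selfadjoint_involutions_on_C16 :
    ¬ ∃ I : Fin 10 →
        (EuclideanSpace ℂ (Fin 16) →ₗ[ℂ] EuclideanSpace ℂ (Fin 16)),
      (∀ a, I a ∘ₗ I a = LinearMap.id) ∧
      (∀ a (x y : EuclideanSpace ℂ (Fin 16)),
        (inner ℂ (I a x) y : ℂ) = inner ℂ x (I a y)) ∧
      (∀ a b, a ≠ b → I a ∘ₗ I b = -(I b ∘ₗ I a)) := by
  rintro ⟨I, h1, -, h3⟩
  classical
  have hsq : ∀ a, (I a : Module.End ℂ (EuclideanSpace ℂ (Fin 16))) * I a = 1 := by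
    intro a
    rw [Module.End.mul_eq_comp, h1 a, Module.End.one_eq_id]
  have hanti : ∀ a b, a ≠ b →
      (I a : Module.End ℂ (EuclideanSpace ℂ (Fin 16))) * I b = -(I b * I a) := by
    intro a b hab
    rw [Module.End.mul_eq_comp, Module.End.mul_eq_comp, h3 a b hab]
  set A := Module.End ℂ (EuclideanSpace ℂ (Fin 16)) with hA
  let trc := LinearMap.trace ℂ (EuclideanSpace ℂ (Fin 16))
  let F : Finset (Fin 10) → A := fun S => prodI I (S.sort (· ≤ ·))
  let B : LinearMap.BilinForm ℂ A :=
    (LinearMap.mul ℂ A).compr₂ trc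
  have hB : ∀ f g : A, B f g = trc (f * g) := fun f g => rfl
  -- count of b in sorted list
  have hcount : ∀ (S : Finset (Fin 10)) (b : Fin 10),
      (S.sort (· ≤ ·)).count b = if b ∈ S then 1 else 0 := by
    intro S b
    by_cases hb : b ∈ S
    · rw [if_pos hb]
      exact List.count_eq_one_of_mem (Finset.sort_nodup _ _) ((Finset.mem_sort _).mpr hb)
    · rw [if_neg hb]
      exact List.count_eq_zero_of_not_mem (fun h => hb ((Finset.mem_sort _).mp h))
  have hortho : B.iIsOrtho F := by
    rw [LinearMap.BilinForm.iIsOrtho_def]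
    intro S T hST
    rw [hB]
    have hmul : F S * F T = prodI I (S.sort (· ≤ ·) ++ T.sort (· ≤ ·)) :=
      (prodI_append I _ _).symm
    rw [hmul]
    set l := S.sort (· ≤ ·) ++ T.sort (· ≤ ·) with hl
    have hlen : l.length = S.card + T.card := by
      simp [hl, Finset.length_sort]
    have hcnt : ∀ b, l.count b =
        (if b ∈ S then 1 else 0) + (if b ∈ T then 1 else 0) := by
      intro b
      rw [hl, List.count_append, hcount, hcount]
    -- find b making length + count odd
    obtain ⟨b, hb⟩ : ∃ b : Fin 10, Odd (l.length + l.count b) := by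
      rcases Nat.even_or_odd (S.card + T.card) with he | ho
      · -- S ≠ T : pick a in the symmetric difference
        have : ∃ a, ¬ (a ∈ S ↔ a ∈ T) := by
          by_contra h
          push_neg at h
          exact hST (Finset.ext h)
        obtain ⟨a, ha⟩ := this
        refine ⟨a, ?_⟩
        have hca : l.count a = 1 := by
          rw [hcnt]
          by_cases h1' : a ∈ S <;> by_cases h2' : a ∈ T <;>
            simp [h1', h2'] at ha ⊢
        rw [hlen, hca]
        exact he.add_one
      · -- pick b with b ∈ S ↔ b ∈ T
        have : ∃ b, (b ∈ S ↔ b ∈ T) := by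
          by_contra h
          push_neg at h
          have hS : S = Tᶜ := by
            ext b
            simp only [Finset.mem_compl]
            have := h b
            tauto
          have hTle : T.card ≤ 10 := by
            simpa using Finset.card_le_univ T
          have hsum : S.card + T.card = 10 := by
            rw [hS, Finset.card_compl, Fintype.card_fin]
            omega
          rw [hsum] at ho
          exact (by decide : ¬ Odd 10) ho
        obtain ⟨b, hb⟩ := this
        refine ⟨b, ?_⟩
        rw [hlen, hcnt]
        by_cases hbS : b ∈ S
        · have hbT : b ∈ T := hb.mp hbS
          simp only [hbS, hbT, if_true]
          obtain ⟨k, hk⟩ := ho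
          exact ⟨k + 1, by omega⟩
        · have hbT : b ∉ T := fun h => hbS (hb.mpr h)
          simp only [hbS, hbT, if_false]
          simpa using ho
    exact trace_prodI_eq_zero I hsq hanti l b hb
  have hnoniso : ∀ S, ¬ B.IsOrtho (F S) (F S) := by
    intro S hiso
    obtain ⟨ε, hε, hsq'⟩ := sq_prodI I hsq hanti (S.sort (· ≤ ·)) (Finset.sort_nodup _ _)
    rw [LinearMap.BilinForm.isOrtho_def, hB] at hiso
    rw [show F S * F S = ε • 1 from hsq'] at hiso
    rw [map_smul, LinearMap.trace_one] at hiso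
    have h16 : (Module.finrank ℂ (EuclideanSpace ℂ (Fin 16)) : ℂ) = 16 := by
      rw [finrank_euclideanSpace_fin]; norm_num
    rw [smul_eq_mul, h16] at hiso
    rcases hε with h | h <;> rw [h] at hiso <;> norm_num at hiso
  have hli : LinearIndependent ℂ F :=
    LinearMap.BilinForm.linearIndependent_of_iIsOrtho hortho hnoniso
  have hcard := hli.fintype_card_le_finrank
  rw [Fintype.card_finset, Fintype.card_fin] at hcard
  have hfr : Module.finrank ℂ A = 256 := by
    have h := Module.finrank_linearMap (S := ℂ) (R := ℂ)
      (M := EuclideanSpace ℂ (Fin 16)) (N := EuclideanSpace ℂ (Fin 16))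
    rw [finrank_euclideanSpace_fin] at h
    rw [show Module.finrank ℂ A
      = Module.finrank ℂ (EuclideanSpace ℂ (Fin 16) →ₗ[ℂ] EuclideanSpace ℂ (Fin 16)) from rfl, h]
  rw [hfr] at hcard
  norm_num at hcard
end TraceAux
end

section
/- Given the Clifford system I₁,…,I₉ on ℝ^16 ≅ 𝕆², the ten block endomorphisms of ℝ^32 ≅ ℝ^16 ⊕ ℝ^16 defined by P₀ = [[0,Id],[Id,0]], P_j = [[0,-J_{1,j+1}],[J_{1,j+1},0]] for j = 1,…,8 (where J_{1β} = I₁∘I_β), and P₉ = [[Id,0],[0,-Id]], form a Clifford system with m = 9 on ℝ^32: each Pₐ is symmetric and orthogonal with Pₐ² = Id, and PₐP_β = -P_βPₐ for α ≠ β. -/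
private lemma fin10_tri (a : Fin 10) :
    a = 0 ∨ a = 9 ∨ ∃ j : Fin 8, a = ⟨j.1 + 1, Nat.lt_of_lt_of_le (Nat.succ_lt_succ j.2) (Nat.le_succ 9)⟩ := by
  rcases a with ⟨v, hv⟩
  rcases eq_or_ne v 0 with h0 | h0
  · left; subst h0; rfl
  rcases eq_or_ne v 9 with h9 | h9
  · right; left; subst h9; rfl
  · right; right; exact ⟨⟨v - 1, by omega⟩, by ext; simp; omega⟩

/-- Given the Spin(9) Clifford system `I₁,…,I₉` on `ℝ¹⁶`, the ten block
endomorphisms of `ℝ³² = ℝ¹⁶ ⊕ ℝ¹⁶` given by `P₀ = [[0,Id],[Id,0]]`,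
`P_j = [[0,-J_{1,j+1}],[J_{1,j+1},0]]` with `J_{1β} = I₁∘I_β` for `j = 1,…,8`,
and `P₉ = [[Id,0],[0,-Id]]` form a Clifford system with `m = 9` on `ℝ³²`:
each `Pₐ` is symmetric and orthogonal with `Pₐ² = Id`, and they pairwise
anticommute. -/
theorem spin10_clifford_system_on_R32
    (I : Fin 9 → Module.End ℝ (EuclideanSpace ℝ (Fin 16)))
    (hsa : ∀ a (x y : EuclideanSpace ℝ (Fin 16)),
      (inner ℝ (I a x) y : ℝ) = inner ℝ x (I a y))
    (hinv : ∀ a, I a * I a = 1)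
    (hanti : ∀ a b, a ≠ b → I a * I b = -(I b * I a))
    (P : Fin 10 → (EuclideanSpace ℝ (Fin 16) × EuclideanSpace ℝ (Fin 16) →ₗ[ℝ]
      EuclideanSpace ℝ (Fin 16) × EuclideanSpace ℝ (Fin 16)))
    (hP0 : P 0 = (LinearMap.snd ℝ _ _).prod (LinearMap.fst ℝ _ _))
    (hPj : ∀ j : Fin 8, P ⟨j.1 + 1, by omega⟩ =
      (-(((I 0 * I ⟨j.1 + 1, by omega⟩ :
          Module.End ℝ (EuclideanSpace ℝ (Fin 16))) :
          EuclideanSpace ℝ (Fin 16) →ₗ[ℝ] EuclideanSpace ℝ (Fin 16)) ∘ₗ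
        LinearMap.snd ℝ _ _)).prod
      (((I 0 * I ⟨j.1 + 1, by omega⟩ :
          Module.End ℝ (EuclideanSpace ℝ (Fin 16))) :
          EuclideanSpace ℝ (Fin 16) →ₗ[ℝ] EuclideanSpace ℝ (Fin 16)) ∘ₗ
        LinearMap.fst ℝ _ _))
    (hP9 : P 9 = (LinearMap.fst ℝ _ _).prod (-(LinearMap.snd ℝ _ _))) :
    (∀ a p q,
      (inner ℝ (P a p).1 q.1 : ℝ) + (inner ℝ (P a p).2 q.2 : ℝ)
        = (inner ℝ p.1 (P a q).1 : ℝ) + (inner ℝ p.2 (P a q).2 : ℝ)) ∧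
    (∀ a p q,
      (inner ℝ (P a p).1 (P a q).1 : ℝ) + (inner ℝ (P a p).2 (P a q).2 : ℝ)
        = (inner ℝ p.1 q.1 : ℝ) + (inner ℝ p.2 q.2 : ℝ)) ∧
    (∀ a, P a ∘ₗ P a = LinearMap.id) ∧
    (∀ a b, a ≠ b → P a ∘ₗ P b = -(P b ∘ₗ P a)) := by
  set E := EuclideanSpace ℝ (Fin 16)
  -- pointwise versions of the hypotheses
  have hinv' : ∀ a (x : E), I a (I a x) = x := by
    intro a x
    have := congrFun (congrArg DFunLike.coe (hinv a)) x
    simpa [Module.End.mul_apply] using this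
  have hanti' : ∀ a b, a ≠ b → ∀ x : E, I a (I b x) = -(I b (I a x)) := by
    intro a b hab x
    have := congrFun (congrArg DFunLike.coe (hanti a b hab)) x
    simpa [Module.End.mul_apply] using this
  -- the complex structures J j = I 0 ∘ I (j+1)
  set J : Fin 8 → (E →ₗ[ℝ] E) := fun j =>
    ((I 0 * I ⟨j.1 + 1, by omega⟩ : Module.End ℝ E) : E →ₗ[ℝ] E) with hJ
  have hne : ∀ j : Fin 8, (0 : Fin 9) ≠ ⟨j.1 + 1, by omega⟩ := by
    intro j h
    have := congrArg Fin.val h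
    simp at this
  have hJapp : ∀ j (x : E), J j x = I 0 (I ⟨j.1 + 1, by omega⟩ x) := by
    intro j x; simp [hJ, Module.End.mul_apply]
  have hJskew : ∀ j (x y : E), (inner ℝ (J j x) y : ℝ) = -(inner ℝ x (J j y) : ℝ) := by
    intro j x y
    rw [hJapp, hsa, hsa, hanti' _ _ (fun h => hne j h.symm), inner_neg_right, hJapp]
  have hJsq : ∀ j (x : E), J j (J j x) = -x := by
    intro j x
    rw [hJapp, hJapp, hanti' _ _ (fun h => hne j h.symm)]
    rw [map_neg, hinv', hinv']
  have hJred : ∀ j k (x : E), J j (J k x) = -(I ⟨j.1 + 1, by omega⟩ (I ⟨k.1 + 1, by omega⟩ x)) := by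
    intro j k x
    rw [hJapp, hJapp, hanti' _ _ (fun h => hne j h.symm)]
    rw [map_neg, hinv']
  have hJJ : ∀ j k, j ≠ k → ∀ x : E, J j (J k x) = -(J k (J j x)) := by
    intro j k hjk x
    have hjk9 : (⟨j.1 + 1, by omega⟩ : Fin 9) ≠ ⟨k.1 + 1, by omega⟩ := by
      intro h
      exact hjk (Fin.ext (by simpa using congrArg Fin.val h))
    rw [hJred, hJred, hanti' _ _ hjk9]
  -- pointwise versions of the P formulas
  have hP0' : ∀ p : E × E, P 0 p = (p.2, p.1) := by
    intro p; rw [hP0]; rfl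
  have hP9' : ∀ p : E × E, P 9 p = (p.1, -p.2) := by
    intro p; rw [hP9]; rfl
  have hPj' : ∀ (j : Fin 8) (p : E × E),
      P ⟨j.1 + 1, by omega⟩ p = (-(J j p.2), J j p.1) := by
    intro j p; rw [hPj j]; rfl
  refine ⟨?_, ?_, ?_, ?_⟩
  · -- symmetry
    intro a p q
    rcases fin10_tri a with rfl | rfl | ⟨j, rfl⟩
    · simp only [hP0']
      exact add_comm _ _
    · simp only [hP9', inner_neg_left, inner_neg_right]
    · simp only [hPj', inner_neg_left, inner_neg_right, hJskew]
      ring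
  · -- orthogonality
    intro a p q
    rcases fin10_tri a with rfl | rfl | ⟨j, rfl⟩
    · simp only [hP0']
      ring
    · simp only [hP9', inner_neg_left, inner_neg_right]
      ring
    · simp only [hPj']
      have h1 : (inner ℝ (-(J j p.2)) (-(J j q.2)) : ℝ) = inner ℝ p.2 q.2 := by
        rw [inner_neg_neg, hJskew, hJsq, inner_neg_right, neg_neg]
      have h2 : (inner ℝ (J j p.1) (J j q.1) : ℝ) = inner ℝ p.1 q.1 := by
        rw [hJskew, hJsq, inner_neg_right, neg_neg]
      rw [h1, h2]
      ring
  · -- squares to identity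
    intro a
    apply LinearMap.ext
    intro p
    rcases fin10_tri a with rfl | rfl | ⟨j, rfl⟩
    · simp [hP0', neg_neg (G := E)]
    · simp [hP9', neg_neg (G := E)]
    · simp [hPj', hJsq, neg_neg (G := E)]
  · -- anticommutation
    intro a b hab
    apply LinearMap.ext
    intro p
    rcases fin10_tri a with rfl | rfl | ⟨j, rfl⟩ <;>
      rcases fin10_tri b with rfl | rfl | ⟨k, rfl⟩
    · exact absurd rfl hab
    · simp [hP0', hP9', Prod.ext_iff, neg_neg (G := E)]
    · simp [hP0', hPj', Prod.ext_iff, neg_neg (G := E)]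
    · simp [hP0', hP9', Prod.ext_iff, neg_neg (G := E)]
    · exact absurd rfl hab
    · simp [hP9', hPj', Prod.ext_iff, neg_neg (G := E)]
    · simp [hP0', hPj', Prod.ext_iff, neg_neg (G := E)]
    · simp [hP9', hPj', Prod.ext_iff, neg_neg (G := E)]
    · have hjk : j ≠ k := by
        rintro rfl; exact hab rfl
      simp [hPj', Prod.ext_iff, hJJ j k hjk]
end

section
/- For the skew-symmetric 9×9 matrix ψ^C = (ψ_{αβ})_{1≤α,β≤9} of Kähler 2-forms associated with the complex structures J_{αβ} = Iₐ∘I_β of the standard Spin(9) Clifford system on ℝ^16, the second coefficient of the characteristic polynomial vanishes: τ₂(ψ^C) = Σ_{1≤α<β≤9} ψ_{αβ}² = 0. -/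
noncomputable section

/-- The element of the exterior algebra of `ℝ¹⁶` representing (a fixed nonzero
multiple of) the Kähler 2-form `ψ_J(X,Y) = ⟨JX,Y⟩` of a skew-adjoint
endomorphism `J`, namely `Σ_k e_k ∧ J e_k` over the standard orthonormal
basis. -/
def kaehlerFormR16 (J : Module.End ℝ (EuclideanSpace ℝ (Fin 16))) :
    ExteriorAlgebra ℝ (EuclideanSpace ℝ (Fin 16)) :=
  ∑ k : Fin 16,
    ExteriorAlgebra.ι ℝ (EuclideanSpace.single k (1 : ℝ)) *
      ExteriorAlgebra.ι ℝ (J (EuclideanSpace.single k (1 : ℝ)))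

namespace Tau2Proof

set_option maxRecDepth 8000
set_option linter.unusedVariables false
set_option linter.unreachableTactic false
set_option linter.unusedTactic false

open Finset
open scoped RealInnerProductSpace

abbrev EE := EuclideanSpace ℝ (Fin 16)
abbrev TT := {S : Finset (Fin 9) // S.card ≤ 4}

def ee (k : Fin 16) : EE := EuclideanSpace.single k 1

local notation "ιι" => ExteriorAlgebra.ι ℝ (M := EE)

/-! ### Basic coordinate and exterior-algebra lemmas -/

lemma coord_eq_inner (v : EE) (i : Fin 16) : (⟪v, ee i⟫ : ℝ) = v i := by
  rw [ee, EuclideanSpace.inner_single_right]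
  simp

lemma sum_coord_smul (v : EE) : ∑ i : Fin 16, v i • ee i = v := by
  ext j
  have : (∑ i : Fin 16, v i • ee i) j = ∑ i : Fin 16, (v i • ee i) j := by
    rw [WithLp.ofLp_sum, Finset.sum_apply]
  rw [this]
  simp only [PiLp.smul_apply, smul_eq_mul, ee, EuclideanSpace.single_apply]
  rw [Finset.sum_eq_single j]
  · simp
  · intro b _ hb
    rw [if_neg (fun h => hb h.symm), mul_zero]
  · intro hj; exact absurd (Finset.mem_univ j) hj

lemma iota_expand (v : EE) : ιι v = ∑ i : Fin 16, v i • ιι (ee i) := by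
  conv_lhs => rw [← sum_coord_smul v]
  rw [map_sum]
  simp [map_smul]

lemma iota_swap (x y : EE) : ιι x * ιι y = -(ιι y * ιι x) := by
  exact eq_neg_of_add_eq_zero_left (ExteriorAlgebra.ι_add_mul_swap x y)

lemma kaehler_eq (J : Module.End ℝ EE) :
    kaehlerFormR16 J = ∑ k : Fin 16, ιι (ee k) * ιι (J (ee k)) := rfl

lemma kaehler_selfadj_zero (A : Module.End ℝ EE)
    (h : ∀ x y : EE, (⟪A x, y⟫ : ℝ) = ⟪x, A y⟫) : kaehlerFormR16 A = 0 := by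
  have hexp : kaehlerFormR16 A
      = ∑ k : Fin 16, ∑ i : Fin 16, (A (ee k)) i • (ιι (ee k) * ιι (ee i)) := by
    rw [kaehler_eq]
    refine Finset.sum_congr rfl (fun k _ => ?_)
    rw [iota_expand (A (ee k)), Finset.mul_sum]
    simp [mul_smul_comm]
  have hsym : ∀ k i : Fin 16, (A (ee k)) i = (A (ee i)) k := by
    intro k i
    rw [← coord_eq_inner (A (ee k)) i, ← coord_eq_inner (A (ee i)) k, h, real_inner_comm]
  have hneg : kaehlerFormR16 A = -kaehlerFormR16 A := by
    conv_lhs => rw [hexp, Finset.sum_comm]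
    rw [hexp]
    rw [← Finset.sum_neg_distrib]
    refine Finset.sum_congr rfl (fun k _ => ?_)
    rw [← Finset.sum_neg_distrib]
    refine Finset.sum_congr rfl (fun i _ => ?_)
    rw [hsym i k, iota_swap]
    simp
  have h2 : (2 : ℝ) • kaehlerFormR16 A = 0 := by
    rw [two_smul]
    nth_rewrite 2 [hneg]
    simp
  have := smul_eq_zero.mp h2
  simpa using this

/-! ### Ordered products of the Clifford generators -/

variable (I : Fin 9 → Module.End ℝ EE)

def Plist (l : List (Fin 9)) : Module.End ℝ EE := (l.map I).prod

@[simp] lemma Plist_nil : Plist I [] = 1 := rfl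
@[simp] lemma Plist_cons (a : Fin 9) (l : List (Fin 9)) :
    Plist I (a :: l) = I a * Plist I l := by simp [Plist]
lemma Plist_append (l₁ l₂ : List (Fin 9)) :
    Plist I (l₁ ++ l₂) = Plist I l₁ * Plist I l₂ := by simp [Plist]
@[simp] lemma Plist_singleton (a : Fin 9) : Plist I [a] = I a := by simp [Plist]

lemma Ia_mul_Plist (hanti : ∀ a b, a ≠ b → I a * I b = -(I b * I a))
    (a : Fin 9) (l : List (Fin 9)) :
    I a * Plist I l = ((-1 : ℝ) ^ ((l.filter (· ≠ a)).length)) • (Plist I l * I a) := by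
  induction l with
  | nil => simp
  | cons b l ih =>
    by_cases hab : b = a
    · subst hab
      have hl : (List.filter (fun x => decide (x ≠ b)) (b :: l)).length
          = (List.filter (fun x => decide (x ≠ b)) l).length := by
        simp [List.filter_cons]
      calc I b * Plist I (b :: l) = I b * (I b * Plist I l) := by rw [Plist_cons]
        _ = I b * ((-1:ℝ) ^ ((l.filter (· ≠ b)).length) • (Plist I l * I b)) := by rw [ih]
        _ = (-1:ℝ) ^ ((l.filter (· ≠ b)).length) • (I b * (Plist I l * I b)) := by
            rw [mul_smul_comm]
        _ = (-1:ℝ) ^ (((b :: l).filter (· ≠ b)).length) • (Plist I (b :: l) * I b) := by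
            rw [hl, Plist_cons, mul_assoc]
    · have h1 : I a * I b = -(I b * I a) := hanti a b (Ne.symm hab)
      have hlen : ((b :: l).filter (· ≠ a)).length = (l.filter (· ≠ a)).length + 1 := by
        simp [List.filter_cons, hab]
      rw [Plist_cons, ← mul_assoc, h1, hlen]
      calc -(I b * I a) * Plist I l = -(I b * (I a * Plist I l)) := by
            rw [neg_mul, mul_assoc]
        _ = -(I b * ((-1:ℝ) ^ ((l.filter (· ≠ a)).length) • (Plist I l * I a))) := by rw [ih]
        _ = ((-1:ℝ) ^ ((l.filter (· ≠ a)).length + 1)) • (I b * (Plist I l * I a)) := by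
            rw [mul_smul_comm, ← neg_smul, pow_succ]; congr 1; ring
        _ = ((-1:ℝ) ^ ((l.filter (· ≠ a)).length + 1)) • (Plist I (b :: l) * I a) := by
            rw [Plist_cons, mul_assoc]

lemma Plist_reverse_mul (hinv : ∀ a, I a * I a = 1) (l : List (Fin 9)) :
    Plist I l.reverse * Plist I l = 1 := by
  induction l with
  | nil => simp
  | cons a l ih =>
    rw [List.reverse_cons, Plist_append, Plist_singleton, Plist_cons]
    calc Plist I l.reverse * I a * (I a * Plist I l)
        = Plist I l.reverse * (I a * I a) * Plist I l := by
          rw [mul_assoc, mul_assoc, mul_assoc]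
      _ = 1 := by rw [hinv, mul_one, ih]

def sgnl : ℕ → ℝ
  | 0 => 1
  | (n+1) => (-1) ^ n * sgnl n

lemma Plist_reverse (hanti : ∀ a b, a ≠ b → I a * I b = -(I b * I a))
    (l : List (Fin 9)) (hnd : l.Nodup) :
    Plist I l.reverse = sgnl l.length • Plist I l := by
  induction l with
  | nil => simp [sgnl]
  | cons a l ih =>
    have hmem : a ∉ l := (List.nodup_cons.mp hnd).1
    have hnd' : l.Nodup := (List.nodup_cons.mp hnd).2
    have hfil : (l.filter (· ≠ a)).length = l.length := by
      rw [List.filter_eq_self.mpr]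
      intro b hb
      simp only [decide_eq_true_eq]
      exact fun h => hmem (h ▸ hb)
    have hcomm := Ia_mul_Plist I hanti a l
    rw [hfil] at hcomm
    have hPIa : Plist I l * I a = ((-1:ℝ) ^ l.length) • (I a * Plist I l) := by
      rw [hcomm, smul_smul, ← pow_add]
      rw [Even.neg_one_pow ⟨l.length, rfl⟩, one_smul]
    rw [List.reverse_cons, Plist_append, Plist_singleton, ih hnd', Plist_cons]
    rw [smul_mul_assoc, hPIa, smul_smul]
    show (sgnl l.length * (-1) ^ l.length) • _ = sgnl (l.length + 1) • _
    rw [mul_comm]; rfl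

lemma inner_Plist_apply (hsa : ∀ a (x y : EE), (inner ℝ (I a x) y : ℝ) = inner ℝ x (I a y))
    (l : List (Fin 9)) (x y : EE) :
    (inner ℝ (Plist I l x) y : ℝ) = inner ℝ x (Plist I l.reverse y) := by
  induction l generalizing y with
  | nil => simp
  | cons a l ih =>
    rw [Plist_cons, Module.End.mul_apply, hsa, ih, List.reverse_cons, Plist_append,
      Plist_singleton, Module.End.mul_apply]

lemma filter_ne_length {l : List (Fin 9)} (hnd : l.Nodup) (a : Fin 9) :
    (l.filter (· ≠ a)).length + (if a ∈ l then 1 else 0) = l.length := by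
  conv_rhs => rw [List.length_eq_length_filter_add (fun x => decide (x ≠ a))]
  congr 1
  have : (fun x => !decide (x ≠ a)) = fun x : Fin 9 => x == a := by
    funext x; by_cases h : x = a <;> simp [h]
  rw [this]
  have hc : (List.filter (fun x => x == a) l).length = List.count a l := by
    rw [List.count, List.countP_eq_length_filter]
  rw [hc]
  by_cases h : a ∈ l
  · simp [h, List.count_eq_one_of_mem hnd h]
  · simp [h, List.count_eq_zero_of_not_mem h]

/-! ### The operators `M_S`, `N_S` and their trace relations -/

def MS (S : Finset (Fin 9)) : Module.End ℝ EE := Plist I (S.sort (· ≤ ·))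
def NS (S : Finset (Fin 9)) : Module.End ℝ EE := Plist I ((S.sort (· ≤ ·)).reverse)
def cnt (a : Fin 9) (S : Finset (Fin 9)) : ℕ := ((S.sort (· ≤ ·)).filter (· ≠ a)).length

lemma cnt_add (a : Fin 9) (S : Finset (Fin 9)) :
    cnt a S + (if a ∈ S then 1 else 0) = S.card := by
  have := filter_ne_length (l := S.sort (· ≤ ·)) (S.sort_nodup (· ≤ ·)) a
  simpa [cnt, Finset.mem_sort, Finset.length_sort] using this

lemma Ia_mul_MS (hanti : ∀ a b, a ≠ b → I a * I b = -(I b * I a)) (a : Fin 9)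
    (S : Finset (Fin 9)) :
    I a * MS I S = ((-1 : ℝ) ^ cnt a S) • (MS I S * I a) :=
  Ia_mul_Plist I hanti a _

lemma Ia_mul_NS (hanti : ∀ a b, a ≠ b → I a * I b = -(I b * I a)) (a : Fin 9)
    (S : Finset (Fin 9)) :
    I a * NS I S = ((-1 : ℝ) ^ cnt a S) • (NS I S * I a) := by
  have h := Ia_mul_Plist I hanti a ((S.sort (· ≤ ·)).reverse)
  rwa [List.filter_reverse, List.length_reverse] at h

lemma NS_mul_MS (hinv : ∀ a, I a * I a = 1) (S : Finset (Fin 9)) :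
    NS I S * MS I S = 1 :=
  Plist_reverse_mul I hinv _

lemma inner_MS (hsa : ∀ a (x y : EE), (inner ℝ (I a x) y : ℝ) = inner ℝ x (I a y))
    (S : Finset (Fin 9)) (x y : EE) : (⟪MS I S x, y⟫ : ℝ) = ⟪x, NS I S y⟫ :=
  inner_Plist_apply I hsa _ x y

lemma NS_eq_sgnl_MS (hanti : ∀ a b, a ≠ b → I a * I b = -(I b * I a))
    (S : Finset (Fin 9)) : NS I S = sgnl S.card • MS I S := by
  rw [NS, MS, Plist_reverse I hanti _ (S.sort_nodup (· ≤ ·)), Finset.length_sort]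

lemma trace_NS_MS_self (hinv : ∀ a, I a * I a = 1) (S : Finset (Fin 9)) :
    LinearMap.trace ℝ EE (NS I S * MS I S) = 16 := by
  rw [NS_mul_MS I hinv, LinearMap.trace_one, finrank_euclideanSpace]
  simp

lemma exists_odd_swap {S T : Finset (Fin 9)} (hS : S.card ≤ 4) (hT : T.card ≤ 4)
    (hne : S ≠ T) : ∃ a : Fin 9, Odd (cnt a T + cnt a S) := by
  rcases Nat.even_or_odd (S.card + T.card) with hpar | hpar
  · -- pick a in the symmetric difference
    have : ∃ a : Fin 9, ¬(a ∈ S ↔ a ∈ T) := by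
      by_contra h
      push_neg at h
      exact hne (Finset.ext_iff.mpr (fun a => (h a)))
    obtain ⟨a, ha⟩ := this
    refine ⟨a, ?_⟩
    have h1 := cnt_add a S
    have h2 := cnt_add a T
    rw [Nat.even_iff] at hpar
    rw [Nat.odd_iff]
    by_cases haS : a ∈ S <;> by_cases haT : a ∈ T <;>
      simp [haS, haT] at h1 h2 ha <;> omega
  · -- pick a outside S ∪ T
    have hcard : (S ∪ T).card < 9 := by
      have := Finset.card_union_le S T
      omega
    have : ∃ a : Fin 9, a ∉ S ∪ T := by
      by_contra h
      push_neg at h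
      have : (S ∪ T) = Finset.univ := Finset.eq_univ_iff_forall.mpr h
      rw [this] at hcard
      simp at hcard
    obtain ⟨a, ha⟩ := this
    rw [Finset.mem_union] at ha
    push_neg at ha
    refine ⟨a, ?_⟩
    have h1 := cnt_add a S
    have h2 := cnt_add a T
    rw [Nat.odd_iff] at hpar ⊢
    simp [ha.1, ha.2] at h1 h2
    omega

lemma trace_NS_MS_zero (hanti : ∀ a b, a ≠ b → I a * I b = -(I b * I a))
    (hinv : ∀ a, I a * I a = 1) {S T : Finset (Fin 9)} (hS : S.card ≤ 4)
    (hT : T.card ≤ 4) (hne : S ≠ T) :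
    LinearMap.trace ℝ EE (NS I T * MS I S) = 0 := by
  obtain ⟨a, hodd⟩ := exists_odd_swap hS hT hne
  have e1 := Ia_mul_NS I hanti a T
  have e2 := Ia_mul_MS I hanti a S
  have key : (I a * (NS I T * MS I S)) * I a = (-1 : ℝ) • (NS I T * MS I S) := by
    have eps : ((-1 : ℝ) ^ cnt a T) * ((-1 : ℝ) ^ cnt a S) = -1 := by
      rw [← pow_add]; exact Odd.neg_one_pow hodd
    calc (I a * (NS I T * MS I S)) * I a
        = (I a * NS I T) * (MS I S * I a) := by simp only [mul_assoc]
      _ = ((-1 : ℝ) ^ cnt a T • (NS I T * I a)) * (MS I S * I a) := by rw [e1]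
      _ = (-1 : ℝ) ^ cnt a T • (NS I T * ((I a * MS I S) * I a)) := by
          rw [smul_mul_assoc]; simp only [mul_assoc]
      _ = (-1 : ℝ) ^ cnt a T • (NS I T * (((-1 : ℝ) ^ cnt a S • (MS I S * I a)) * I a)) := by
          rw [e2]
      _ = ((-1 : ℝ) ^ cnt a T * (-1 : ℝ) ^ cnt a S) • (NS I T * (MS I S * (I a * I a))) := by
          rw [smul_mul_assoc, mul_smul_comm, smul_smul]; simp only [mul_assoc]
      _ = (-1 : ℝ) • (NS I T * MS I S) := by rw [hinv a, mul_one, eps]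
  have t0 : LinearMap.trace ℝ EE (I a * (NS I T * MS I S) * I a)
      = LinearMap.trace ℝ EE (NS I T * MS I S) := by
    rw [LinearMap.trace_mul_comm, ← mul_assoc, hinv a, one_mul]
  rw [key, map_smul] at t0
  simp only [smul_eq_mul, neg_one_mul] at t0
  linarith

/-! ### The Fierz identity -/

set_option maxRecDepth 10000 in
lemma card_TT : Fintype.card TT = 256 := by
  rw [Fintype.card_subtype]; decide

lemma finrank_end : Module.finrank ℝ (Module.End ℝ EE) = 256 := by
  show Module.finrank ℝ (EE →ₗ[ℝ] EE) = 256
  rw [Module.finrank_linearMap, finrank_euclideanSpace]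
  simp

lemma ms_li (hanti : ∀ a b, a ≠ b → I a * I b = -(I b * I a))
    (hinv : ∀ a, I a * I a = 1) :
    LinearIndependent ℝ (fun T : TT => MS I T.1) := by
  rw [Fintype.linearIndependent_iff]
  intro g hg T
  have h := congrArg (fun X => LinearMap.trace ℝ EE (NS I T.1 * X)) hg
  simp only [Finset.mul_sum, mul_smul_comm, map_sum, map_smul, mul_zero, map_zero,
    smul_eq_mul] at h
  rw [Finset.sum_eq_single T] at h
  · rw [trace_NS_MS_self I hinv T.1] at h
    linarith
  · intro S _ hST
    rw [trace_NS_MS_zero I hanti hinv S.2 T.2 (fun hh => hST (Subtype.ext hh)), mul_zero]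
  · intro hT; exact absurd (Finset.mem_univ T) hT

lemma ms_span (hanti : ∀ a b, a ≠ b → I a * I b = -(I b * I a))
    (hinv : ∀ a, I a * I a = 1) :
    Submodule.span ℝ (Set.range (fun T : TT => MS I T.1)) = ⊤ :=
  haveI : Nonempty TT := ⟨⟨∅, by simp⟩⟩
  (ms_li I hanti hinv).span_eq_top_of_card_eq_finrank (by rw [card_TT, finrank_end])

lemma fierz_endo (hanti : ∀ a b, a ≠ b → I a * I b = -(I b * I a))
    (hinv : ∀ a, I a * I a = 1) (X : Module.End ℝ EE) :
    ∑ T : TT, (LinearMap.trace ℝ EE (NS I T.1 * X)) • MS I T.1 = (16 : ℝ) • X := by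
  let F : Module.End ℝ EE →ₗ[ℝ] Module.End ℝ EE :=
    ∑ T : TT, ((LinearMap.trace ℝ EE).comp (LinearMap.mulLeft ℝ (NS I T.1))).smulRight
      (MS I T.1)
  have hF : ∀ X, F X = ∑ T : TT, (LinearMap.trace ℝ EE (NS I T.1 * X)) • MS I T.1 := by
    intro X
    simp [F, LinearMap.sum_apply, LinearMap.smulRight_apply, LinearMap.mulLeft_apply]
  have heq : F = (16 : ℝ) • (LinearMap.id : Module.End ℝ EE →ₗ[ℝ] Module.End ℝ EE) := by
    apply LinearMap.ext_on (ms_span I hanti hinv)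
    rintro _ ⟨T, rfl⟩
    rw [hF]
    rw [Finset.sum_eq_single T]
    · rw [trace_NS_MS_self I hinv T.1]
      simp
    · intro S _ hST
      rw [trace_NS_MS_zero I hanti hinv T.2 S.2 (fun hh => hST (Subtype.ext hh.symm)),
        zero_smul]
    · intro hT; exact absurd (Finset.mem_univ T) hT
  have := congrArg (fun G => G X) heq
  simpa [hF] using this

/-! ### Rank-one operators and vector forms of the Fierz identity -/

def rk (x a : EE) : Module.End ℝ EE := (innerₗ EE x).smulRight a

@[simp] lemma rk_apply (x a v : EE) : rk x a v = ⟪x, v⟫ • a := rfl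

lemma trace_rk (x a : EE) : LinearMap.trace ℝ EE (rk x a) = ⟪x, a⟫ := by
  classical
  rw [LinearMap.trace_eq_matrix_trace ℝ (PiLp.basisFun 2 ℝ (Fin 16)) (rk x a)]
  rw [Matrix.trace]
  simp only [Matrix.diag, LinearMap.toMatrix_apply, PiLp.basisFun_apply, PiLp.basisFun_repr,
    rk_apply, PiLp.smul_apply, smul_eq_mul]
  rw [PiLp.inner_apply]
  congr 1
  funext i
  show (inner ℝ x (EuclideanSpace.single i (1:ℝ)) : ℝ) * a i = _
  rw [EuclideanSpace.inner_single_right]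
  simp [mul_comm]

def lam (g : ℕ) : ℝ := (-1) ^ g * (9 - 2 * (g : ℝ))

lemma NS_rk (T : Finset (Fin 9)) (x a : EE) :
    NS I T * rk x a = rk x (NS I T a) := by
  apply LinearMap.ext
  intro v
  simp [Module.End.mul_apply, map_smul]

lemma trace_NS_rk (hsa : ∀ a (x y : EE), (inner ℝ (I a x) y : ℝ) = inner ℝ x (I a y))
    (T : Finset (Fin 9)) (x a : EE) :
    LinearMap.trace ℝ EE (NS I T * rk x a) = ⟪MS I T x, a⟫ := by
  rw [NS_rk, trace_rk, inner_MS I hsa]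

lemma fierz_vec (hsa : ∀ a (x y : EE), (inner ℝ (I a x) y : ℝ) = inner ℝ x (I a y))
    (hanti : ∀ a b, a ≠ b → I a * I b = -(I b * I a))
    (hinv : ∀ a, I a * I a = 1) (x a y : EE) :
    ∑ T : TT, (⟪MS I T.1 x, a⟫) • MS I T.1 y = (16 * ⟪x, y⟫) • a := by
  have h := fierz_endo I hanti hinv (rk x a)
  simp only [trace_NS_rk I hsa] at h
  have h2 := congrArg (fun (f : Module.End ℝ EE) => f y) h
  simp only [LinearMap.sum_apply, LinearMap.smul_apply, rk_apply] at h2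
  rw [h2, smul_smul]

lemma Ia_MS_Ia (hanti : ∀ a b, a ≠ b → I a * I b = -(I b * I a))
    (hinv : ∀ a, I a * I a = 1) (a : Fin 9) (S : Finset (Fin 9)) :
    I a * MS I S * I a = ((-1 : ℝ) ^ cnt a S) • MS I S := by
  rw [Ia_mul_MS I hanti, smul_mul_assoc, mul_assoc, hinv, mul_one]

lemma sum_conj_MS (hanti : ∀ a b, a ≠ b → I a * I b = -(I b * I a))
    (hinv : ∀ a, I a * I a = 1) (S : Finset (Fin 9)) :
    ∑ a : Fin 9, I a * MS I S * I a = lam S.card • MS I S := by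
  have hconj : ∀ a : Fin 9, I a * MS I S * I a = ((-1 : ℝ) ^ cnt a S) • MS I S :=
    fun a => Ia_MS_Ia I hanti hinv a S
  simp only [hconj]
  rw [← Finset.sum_smul]
  congr 1
  rw [← Finset.sum_add_sum_compl S]
  have hS9 : S.card ≤ 9 := by
    have := Finset.card_le_univ S; simpa using this
  have hmem : ∀ a ∈ S, ((-1 : ℝ) ^ cnt a S) = (-1) ^ (S.card - 1) := by
    intro a ha
    have := cnt_add a S
    simp only [ha, if_true] at this
    congr 1
    omega
  have hnotmem : ∀ a ∈ Sᶜ, ((-1 : ℝ) ^ cnt a S) = (-1) ^ S.card := by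
    intro a ha
    rw [Finset.mem_compl] at ha
    have := cnt_add a S
    simp only [ha, if_false] at this
    congr 1
    all_goals omega
  rw [Finset.sum_congr rfl hmem, Finset.sum_congr rfl hnotmem,
    Finset.sum_const, Finset.sum_const, Finset.card_compl]
  simp only [Fintype.card_fin, nsmul_eq_mul]
  rcases Nat.eq_zero_or_pos S.card with h0 | hpos
  · rw [h0]; norm_num [lam]
  · obtain ⟨m, hm'⟩ : ∃ m, S.card = m + 1 := ⟨S.card - 1, by omega⟩
    have hm8 : m ≤ 8 := by omega
    rw [hm']
    simp only [Nat.add_sub_cancel, lam]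
    have h8 : ((9 - (m + 1) : ℕ) : ℝ) = 8 - (m : ℝ) := by
      rw [Nat.cast_sub (by omega)]
      push_cast; ring
    rw [show 9 - (m + 1) = 8 - m from by omega] at h8 ⊢
    rw [h8, pow_succ]
    try push_cast
    try ring

lemma Ia_rk_Ia (hsa : ∀ a (x y : EE), (inner ℝ (I a x) y : ℝ) = inner ℝ x (I a y))
    (a : Fin 9) (x v : EE) :
    I a * rk x v * I a = rk (I a x) (I a v) := by
  apply LinearMap.ext
  intro w
  simp only [Module.End.mul_apply, rk_apply, map_smul]
  rw [hsa a x w]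

lemma fierz_lam (hsa : ∀ a (x y : EE), (inner ℝ (I a x) y : ℝ) = inner ℝ x (I a y))
    (hanti : ∀ a b, a ≠ b → I a * I b = -(I b * I a))
    (hinv : ∀ a, I a * I a = 1) (x a y : EE) :
    ∑ T : TT, (lam T.1.card * ⟪MS I T.1 x, a⟫) • MS I T.1 y
      = (16 : ℝ) • ∑ α : Fin 9, ⟪I α x, y⟫ • I α a := by
  have h := fierz_endo I hanti hinv (rk x a)
  simp only [trace_NS_rk I hsa] at h
  have h2 := congrArg (fun (X : Module.End ℝ EE) => ∑ α : Fin 9, I α * X * I α) h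
  simp only [Finset.mul_sum, Finset.sum_mul, mul_smul_comm, smul_mul_assoc] at h2
  rw [Finset.sum_comm] at h2
  have hL : ∀ T : TT, ∑ α : Fin 9, ⟪MS I T.1 x, a⟫ • (I α * MS I T.1 * I α)
      = (lam T.1.card * ⟪MS I T.1 x, a⟫) • MS I T.1 := by
    intro T
    rw [← Finset.smul_sum, sum_conj_MS I hanti hinv T.1, smul_smul, mul_comm]
  rw [Finset.sum_congr rfl (fun T _ => hL T)] at h2
  simp only [Ia_rk_Ia I hsa] at h2
  have h4 := congrArg (fun (f : Module.End ℝ EE) => f y) h2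
  simp only [LinearMap.sum_apply, LinearMap.smul_apply, rk_apply] at h4
  rw [h4, Finset.smul_sum]

/-! ### The crossed sums in the exterior algebra -/

def crossed (A : Module.End ℝ EE) (k l : Fin 16) : ExteriorAlgebra ℝ EE :=
  ιι (ee k) * ιι (ee l) * ιι (A (ee k)) * ιι (A (ee l))

lemma crossed_expand (A : Module.End ℝ EE) (k l : Fin 16) :
    crossed A k l = ∑ i : Fin 16,
      (⟪A (ee k), ee i⟫ : ℝ) • (ιι (ee k) * ιι (ee l) * ιι (ee i) * ιι (A (ee l))) := by
  rw [crossed, iota_expand (A (ee k))]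
  rw [Finset.mul_sum, Finset.sum_mul]
  refine Finset.sum_congr rfl (fun i _ => ?_)
  rw [mul_smul_comm, smul_mul_assoc, coord_eq_inner]

lemma sum_smul_iota_mul (c : TT → ℝ) (v : TT → EE) (W : ExteriorAlgebra ℝ EE) :
    ∑ T : TT, c T • (W * ιι (v T)) = W * ιι (∑ T : TT, c T • v T) := by
  rw [map_sum, Finset.mul_sum]
  refine Finset.sum_congr rfl (fun T _ => ?_)
  rw [map_smul, mul_smul_comm]

lemma crossed_fierz_kl (hsa : ∀ a (x y : EE), (inner ℝ (I a x) y : ℝ) = inner ℝ x (I a y))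
    (hanti : ∀ a b, a ≠ b → I a * I b = -(I b * I a))
    (hinv : ∀ a, I a * I a = 1) (k l : Fin 16) :
    ∑ T : TT, crossed (MS I T.1) k l = 0 := by
  have h1 : ∑ T : TT, crossed (MS I T.1) k l
      = ∑ i : Fin 16, ∑ T : TT,
        (⟪MS I T.1 (ee k), ee i⟫ : ℝ) •
          ((ιι (ee k) * ιι (ee l) * ιι (ee i)) * ιι (MS I T.1 (ee l))) := by
    rw [Finset.sum_congr rfl (fun T _ => crossed_expand (MS I T.1) k l), Finset.sum_comm]
  rw [h1]
  rw [Finset.sum_congr rfl (fun i _ => sum_smul_iota_mul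
    (fun T => (⟪MS I T.1 (ee k), ee i⟫ : ℝ)) (fun T => MS I T.1 (ee l)) _)]
  rw [Finset.sum_congr rfl (fun i _ => by
    rw [fierz_vec I hsa hanti hinv (ee k) (ee i) (ee l)])]
  refine Finset.sum_eq_zero (fun i _ => ?_)
  rw [map_smul, mul_smul_comm, mul_assoc, mul_assoc]
  rw [ExteriorAlgebra.ι_sq_zero]
  simp

lemma sum_l_collapse (α : Fin 9) (k i : Fin 16) :
    ∑ l : Fin 16, ((I α (ee k)) l) •
        (ιι (ee k) * ιι (ee l) * ιι (ee i) * ιι (I α (ee i)))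
      = ιι (ee k) * ιι (I α (ee k)) * ιι (ee i) * ιι (I α (ee i)) := by
  conv_rhs => rw [iota_expand (I α (ee k))]
  rw [Finset.mul_sum, Finset.sum_mul, Finset.sum_mul]
  exact Finset.sum_congr rfl fun l _ => by
    rw [mul_smul_comm, smul_mul_assoc, smul_mul_assoc]

lemma sum_straight (A : Module.End ℝ EE) :
    ∑ k : Fin 16, ∑ i : Fin 16,
        ιι (ee k) * ιι (A (ee k)) * ιι (ee i) * ιι (A (ee i))
      = kaehlerFormR16 A * kaehlerFormR16 A := by
  rw [kaehler_eq, Finset.sum_mul_sum]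
  exact Finset.sum_congr rfl fun k _ => Finset.sum_congr rfl fun i _ => by
    rw [← mul_assoc]

lemma crossed_lam_kl (hsa : ∀ a (x y : EE), (inner ℝ (I a x) y : ℝ) = inner ℝ x (I a y))
    (hanti : ∀ a b, a ≠ b → I a * I b = -(I b * I a))
    (hinv : ∀ a, I a * I a = 1) (k l : Fin 16) :
    ∑ T : TT, lam T.1.card • crossed (MS I T.1) k l
      = ∑ i : Fin 16, ∑ α : Fin 9, (16 * (⟪I α (ee k), ee l⟫ : ℝ)) •
          (ιι (ee k) * ιι (ee l) * ιι (ee i) * ιι (I α (ee i))) := by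
  have h1 : ∀ T : TT, lam T.1.card • crossed (MS I T.1) k l
      = ∑ i : Fin 16, (lam T.1.card * (⟪MS I T.1 (ee k), ee i⟫ : ℝ)) •
          ((ιι (ee k) * ιι (ee l) * ιι (ee i)) * ιι (MS I T.1 (ee l))) := by
    intro T
    rw [crossed_expand, Finset.smul_sum]
    exact Finset.sum_congr rfl fun i _ => by rw [smul_smul]
  rw [Finset.sum_congr rfl (fun T _ => h1 T), Finset.sum_comm]
  refine Finset.sum_congr rfl (fun i _ => ?_)
  rw [sum_smul_iota_mul (fun T => lam T.1.card * (⟪MS I T.1 (ee k), ee i⟫ : ℝ))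
    (fun T => MS I T.1 (ee l)) _]
  rw [fierz_lam I hsa hanti hinv (ee k) (ee i) (ee l)]
  rw [map_smul, map_sum, mul_smul_comm, Finset.mul_sum, Finset.smul_sum]
  refine Finset.sum_congr rfl (fun α _ => ?_)
  rw [map_smul, mul_smul_comm, smul_smul]

lemma lam_total (hsa : ∀ a (x y : EE), (inner ℝ (I a x) y : ℝ) = inner ℝ x (I a y))
    (hanti : ∀ a b, a ≠ b → I a * I b = -(I b * I a))
    (hinv : ∀ a, I a * I a = 1) :
    ∑ T : TT, lam T.1.card • (∑ k : Fin 16, ∑ l : Fin 16, crossed (MS I T.1) k l)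
      = (16 : ℝ) • ∑ α : Fin 9, kaehlerFormR16 (I α) * kaehlerFormR16 (I α) := by
  have h0 : ∑ T : TT, lam T.1.card • (∑ k : Fin 16, ∑ l : Fin 16, crossed (MS I T.1) k l)
      = ∑ k : Fin 16, ∑ l : Fin 16, ∑ T : TT, lam T.1.card • crossed (MS I T.1) k l := by
    simp only [Finset.smul_sum]
    rw [Finset.sum_comm]
    exact Finset.sum_congr rfl fun k _ => Finset.sum_comm
  rw [h0]
  rw [Finset.sum_congr rfl (fun k _ => Finset.sum_congr rfl
    (fun l _ => crossed_lam_kl I hsa hanti hinv k l))]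
  have h2 : ∀ k : Fin 16, ∑ l : Fin 16, ∑ i : Fin 16, ∑ α : Fin 9,
        (16 * (⟪I α (ee k), ee l⟫ : ℝ)) •
          (ιι (ee k) * ιι (ee l) * ιι (ee i) * ιι (I α (ee i)))
      = ∑ i : Fin 16, ∑ α : Fin 9, (16 : ℝ) •
          (ιι (ee k) * ιι (I α (ee k)) * ιι (ee i) * ιι (I α (ee i))) := by
    intro k
    rw [Finset.sum_comm]
    refine Finset.sum_congr rfl (fun i _ => ?_)
    rw [Finset.sum_comm]
    refine Finset.sum_congr rfl (fun α _ => ?_)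
    have hco : ∀ l : Fin 16, (16 * (⟪I α (ee k), ee l⟫ : ℝ)) •
          (ιι (ee k) * ιι (ee l) * ιι (ee i) * ιι (I α (ee i)))
        = (16 : ℝ) • (((I α (ee k)) l) •
          (ιι (ee k) * ιι (ee l) * ιι (ee i) * ιι (I α (ee i)))) := by
      intro l
      rw [smul_smul, coord_eq_inner]
    rw [Finset.sum_congr rfl (fun l _ => hco l), ← Finset.smul_sum, sum_l_collapse]
  rw [Finset.sum_congr rfl (fun k _ => h2 k)]
  have h3 : ∀ k : Fin 16, ∑ i : Fin 16, ∑ α : Fin 9, (16 : ℝ) •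
          (ιι (ee k) * ιι (I α (ee k)) * ιι (ee i) * ιι (I α (ee i)))
      = ∑ α : Fin 9, ∑ i : Fin 16, (16 : ℝ) •
          (ιι (ee k) * ιι (I α (ee k)) * ιι (ee i) * ιι (I α (ee i))) :=
    fun k => Finset.sum_comm
  rw [Finset.sum_congr rfl (fun k _ => h3 k), Finset.sum_comm, Finset.smul_sum]
  refine Finset.sum_congr rfl fun α _ => ?_
  rw [← sum_straight (I α), Finset.smul_sum]
  refine Finset.sum_congr rfl fun k _ => ?_
  rw [Finset.smul_sum]

lemma crossed_eq_neg (A : Module.End ℝ EE) :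
    ∑ k : Fin 16, ∑ l : Fin 16, crossed A k l
      = -(kaehlerFormR16 A * kaehlerFormR16 A) := by
  have hper : ∀ k l : Fin 16, crossed A k l
      = -((ιι (ee k) * ιι (A (ee k))) * (ιι (ee l) * ιι (A (ee l)))) := by
    intro k l
    rw [crossed, mul_assoc (ιι (ee k)) (ιι (ee l)) (ιι (A (ee k)))]
    rw [iota_swap (ee l) (A (ee k))]
    rw [mul_neg, neg_mul]
    congr 1
    simp only [mul_assoc]
  rw [Finset.sum_congr rfl (fun k _ => Finset.sum_congr rfl (fun l _ => hper k l))]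
  rw [kaehler_eq, Finset.sum_mul_sum]
  rw [← Finset.sum_neg_distrib]
  exact Finset.sum_congr rfl fun k _ => Finset.sum_neg_distrib _

/-! ### Grade decomposition and the pair/2-subset bijection -/

lemma sum_TT_decomp (f : Finset (Fin 9) → ExteriorAlgebra ℝ EE) :
    ∑ T : TT, f T.1
      = ∑ g ∈ Finset.range 5, ∑ S ∈ Finset.univ.filter
          (fun S : Finset (Fin 9) => S.card = g), f S := by
  rw [← Finset.sum_subtype (Finset.univ.filter (fun S : Finset (Fin 9) => S.card ≤ 4))
    (fun S => by simp) f]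
  rw [← Finset.sum_fiberwise_of_maps_to (g := fun S : Finset (Fin 9) => S.card)
    (t := Finset.range 5) (fun S hS => by simp at hS ⊢; omega) f]
  refine Finset.sum_congr rfl (fun g hg => ?_)
  refine Finset.sum_congr ?_ (fun _ _ => rfl)
  rw [Finset.filter_filter]
  refine Finset.filter_congr (fun S _ => ?_)
  simp only [Finset.mem_range] at hg
  constructor
  · rintro ⟨-, h⟩; exact h
  · intro h; exact ⟨by omega, h⟩

lemma pair_sets (val : Finset (Fin 9) → ExteriorAlgebra ℝ EE) :
    ∑ p ∈ Finset.univ.filter (fun p : Fin 9 × Fin 9 => p.1 < p.2), val {p.1, p.2}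
      = ∑ S ∈ Finset.univ.filter (fun S : Finset (Fin 9) => S.card = 2), val S := by
  refine Finset.sum_bij (fun p _ => ({p.1, p.2} : Finset (Fin 9))) ?_ ?_ ?_ ?_
  · intro p hp
    simp only [Finset.mem_filter, Finset.mem_univ, true_and] at hp ⊢
    exact Finset.card_pair (ne_of_lt hp)
  · intro p hp q hq h0
    have h : ({p.1, p.2} : Finset (Fin 9)) = {q.1, q.2} := h0
    simp only [Finset.mem_filter, Finset.mem_univ, true_and] at hp hq
    have h1 : p.1 ∈ ({q.1, q.2} : Finset (Fin 9)) := by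
      rw [← h]; exact Finset.mem_insert_self _ _
    have h2 : p.2 ∈ ({q.1, q.2} : Finset (Fin 9)) := by
      rw [← h]; exact Finset.mem_insert_of_mem (Finset.mem_singleton_self _)
    have h3 : q.1 ∈ ({p.1, p.2} : Finset (Fin 9)) := by
      rw [h]; exact Finset.mem_insert_self _ _
    simp only [Finset.mem_insert, Finset.mem_singleton] at h1 h2 h3
    have : p.1 = q.1 ∧ p.2 = q.2 := by
      rcases h1 with e1 | e1 <;> rcases h2 with e2 | e2
      · exact absurd (e1 ▸ e2 ▸ hp) (lt_irrefl _)
      · exact ⟨e1, e2⟩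
      · exfalso
        rcases h3 with e3 | e3
        · exact absurd (e3 ▸ e2 ▸ hp) (lt_irrefl _)
        · have := hp.trans (e2 ▸ hq)
          exact absurd (e1 ▸ this) (lt_irrefl _)
      · exfalso
        rcases h3 with e3 | e3
        · have : p.1 = p.2 := e1.trans e2.symm
          exact absurd (this ▸ hp) (lt_irrefl _)
        · have : p.1 = p.2 := e1.trans e2.symm
          exact absurd (this ▸ hp) (lt_irrefl _)
    exact Prod.ext this.1 this.2
  · intro S hS
    simp only [Finset.mem_filter, Finset.mem_univ, true_and] at hS
    obtain ⟨a, b, hab, rfl⟩ := Finset.card_eq_two.mp hS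
    rcases lt_or_gt_of_ne hab with h | h
    · exact ⟨(a, b), Finset.mem_filter.mpr ⟨Finset.mem_univ _, h⟩, rfl⟩
    · exact ⟨(b, a), Finset.mem_filter.mpr ⟨Finset.mem_univ _, h⟩, Finset.pair_comm b a⟩
  · intro p hp
    rfl

lemma sort_pair (a b : Fin 9) (hab : a < b) :
    ({a, b} : Finset (Fin 9)).sort (· ≤ ·) = [a, b] := by
  have h2 : a ∉ ({b} : Finset (Fin 9)) := by
    simp only [Finset.mem_singleton]; exact ne_of_lt hab
  rw [show ({a, b} : Finset (Fin 9)) = insert a {b} from rfl]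
  rw [Finset.sort_insert (· ≤ ·) (fun c hc => by
    rw [Finset.mem_singleton] at hc; exact hc ▸ le_of_lt hab) h2]
  rw [Finset.sort_singleton]

lemma MS_pair (a b : Fin 9) (hab : a < b) : MS I {a, b} = I a * I b := by
  rw [MS, sort_pair a b hab]
  show Plist I [a, b] = I a * I b
  rw [Plist_cons, Plist_singleton]

lemma kaehler_MS_zero (hsa : ∀ a (x y : EE), (inner ℝ (I a x) y : ℝ) = inner ℝ x (I a y))
    (hanti : ∀ a b, a ≠ b → I a * I b = -(I b * I a))
    (S : Finset (Fin 9)) (hsg : sgnl S.card = 1) :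
    kaehlerFormR16 (MS I S) = 0 := by
  apply kaehler_selfadj_zero
  intro x y
  rw [inner_MS I hsa, NS_eq_sgnl_MS I hanti, hsg, one_smul]

end Tau2Proof

/-- For the skew-symmetric `9 × 9` matrix `ψᶜ` of Kähler 2-forms of the 36
complex structures `J_{αβ} = Iₐ∘I_β` of a Spin(9) Clifford system `I₁,…,I₉`
on `ℝ¹⁶`, the second coefficient of the characteristic polynomial vanishes:
`τ₂(ψᶜ) = Σ_{α<β} ψ_{αβ}² = 0`. -/
theorem tau2_psiC_eq_zero
    (I : Fin 9 → Module.End ℝ (EuclideanSpace ℝ (Fin 16)))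
    (hsa : ∀ a (x y : EuclideanSpace ℝ (Fin 16)),
      (inner ℝ (I a x) y : ℝ) = inner ℝ x (I a y))
    (hinv : ∀ a, I a * I a = 1)
    (hanti : ∀ a b, a ≠ b → I a * I b = -(I b * I a)) :
    ∑ p ∈ Finset.univ.filter (fun p : Fin 9 × Fin 9 => p.1 < p.2),
      kaehlerFormR16 (I p.1 * I p.2) ^ 2 = 0 := by
  classical
  open Tau2Proof in
  -- abbreviation for the square of the Kähler form of `M_S`
  set κκ : Finset (Fin 9) → ExteriorAlgebra ℝ EE :=
    fun S => kaehlerFormR16 (MS I S) * kaehlerFormR16 (MS I S) with hκκ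
  -- the target sum equals the sum over 2-element subsets
  have hMain : ∑ p ∈ Finset.univ.filter (fun p : Fin 9 × Fin 9 => p.1 < p.2),
      kaehlerFormR16 (I p.1 * I p.2) ^ 2
      = ∑ S ∈ Finset.univ.filter (fun S : Finset (Fin 9) => S.card = 2), κκ S := by
    rw [Finset.sum_congr rfl (fun p hp => ?_), pair_sets κκ]
    have hlt : p.1 < p.2 := (Finset.mem_filter.mp hp).2
    show kaehlerFormR16 (I p.1 * I p.2) ^ 2 = κκ {p.1, p.2}
    rw [hκκ]
    simp only []
    rw [MS_pair I p.1 p.2 hlt, pow_two]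
  -- zero fibers
  have hfib_zero : ∀ g : ℕ, sgnl g = 1 →
      ∑ S ∈ Finset.univ.filter (fun S : Finset (Fin 9) => S.card = g), κκ S = 0 := by
    intro g hg
    refine Finset.sum_eq_zero (fun S hS => ?_)
    have hc : S.card = g := (Finset.mem_filter.mp hS).2
    rw [hκκ]
    simp only []
    rw [kaehler_MS_zero I hsa hanti S (by rw [hc]; exact hg), zero_mul]
  have hsg0 : sgnl 0 = 1 := rfl
  have hsg1 : sgnl 1 = 1 := by norm_num [sgnl]
  have hsg4 : sgnl 4 = 1 := by norm_num [sgnl]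
  -- first identity: Σ_T κκ = 0
  have hT0 : ∑ T : TT, ∑ k : Fin 16, ∑ l : Fin 16, crossed (MS I T.1) k l = 0 := by
    calc ∑ T : TT, ∑ k : Fin 16, ∑ l : Fin 16, crossed (MS I T.1) k l
        = ∑ k : Fin 16, ∑ T : TT, ∑ l : Fin 16, crossed (MS I T.1) k l :=
          Finset.sum_comm
      _ = ∑ k : Fin 16, ∑ l : Fin 16, ∑ T : TT, crossed (MS I T.1) k l :=
          Finset.sum_congr rfl fun k _ => Finset.sum_comm
      _ = 0 := by
          rw [Finset.sum_congr rfl (fun k _ => Finset.sum_congr rfl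
            (fun l _ => crossed_fierz_kl I hsa hanti hinv k l))]
          simp
  have hTκ : ∑ T : TT, κκ T.1 = 0 := by
    have h := hT0
    rw [Finset.sum_congr rfl (fun T _ => crossed_eq_neg (MS I T.1))] at h
    rw [Finset.sum_neg_distrib, neg_eq_zero] at h
    exact h
  -- second identity: Σ_T lam • κκ = 0
  have hLam0 : ∑ T : TT, lam T.1.card •
      (∑ k : Fin 16, ∑ l : Fin 16, crossed (MS I T.1) k l) = 0 := by
    rw [lam_total I hsa hanti hinv]
    rw [Finset.sum_eq_zero (fun α _ => by
      rw [kaehler_selfadj_zero (I α) (fun x y => hsa α x y), zero_mul])]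
    simp
  have hLamκ : ∑ T : TT, lam T.1.card • κκ T.1 = 0 := by
    have h := hLam0
    rw [Finset.sum_congr rfl (fun T _ => by
      rw [crossed_eq_neg (MS I T.1), smul_neg])] at h
    rw [Finset.sum_neg_distrib, neg_eq_zero] at h
    exact h
  -- decompose over grades
  rw [sum_TT_decomp κκ] at hTκ
  rw [sum_TT_decomp (fun S => lam S.card • κκ S)] at hLamκ
  -- per-fiber constancy of lam
  have hfib_lam : ∀ g : ℕ,
      ∑ S ∈ Finset.univ.filter (fun S : Finset (Fin 9) => S.card = g),
        lam S.card • κκ S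
      = lam g • ∑ S ∈ Finset.univ.filter (fun S : Finset (Fin 9) => S.card = g), κκ S := by
    intro g
    rw [Finset.smul_sum]
    refine Finset.sum_congr rfl (fun S hS => ?_)
    rw [(Finset.mem_filter.mp hS).2]
  rw [Finset.sum_congr rfl (fun g _ => hfib_lam g)] at hLamκ
  -- expand the range-5 sums
  rw [Finset.sum_range_succ, Finset.sum_range_succ, Finset.sum_range_succ,
    Finset.sum_range_succ, Finset.sum_range_succ, Finset.sum_range_zero] at hTκ hLamκ
  rw [hfib_zero 0 hsg0, hfib_zero 1 hsg1, hfib_zero 4 hsg4] at hTκ hLamκ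
  simp only [zero_add, add_zero, smul_zero] at hTκ hLamκ
  -- now hTκ : A2 + A3 = 0, hLamκ : lam 2 • A2 + lam 3 • A3 = 0
  set A2 := ∑ S ∈ Finset.univ.filter (fun S : Finset (Fin 9) => S.card = 2), κκ S with hA2
  set A3 := ∑ S ∈ Finset.univ.filter (fun S : Finset (Fin 9) => S.card = 3), κκ S with hA3
  have hl2 : lam 2 = 5 := by norm_num [lam]
  have hl3 : lam 3 = -3 := by norm_num [lam]
  have h32 : A3 = -A2 := by
    have := hTκ
    linear_combination (norm := module) this
  rw [hl2, hl3, h32] at hLamκ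
  have h8 : (8 : ℝ) • A2 = 0 := by
    linear_combination (norm := module) hLamκ
  have hA2zero : A2 = 0 := by
    rcases smul_eq_zero.mp h8 with h | h
    · norm_num at h
    · exact h
  rw [hMain]
  exact hA2zero
end
end
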